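/- Let G be a planar circular network with boundary sources A and boundary sinks B, and define F̃_k(a, b) for tuples a ∈ A^k, b ∈ B^k by F̃_k(a,b) = sgn(a,b) · F_k({a₁,…,a_k},{b₁,…,b_k}) when entries are distinct, and 0 otherwise, where F_k(A',B') = (1/C) Σ_{alternating flows f connecting A' to B'} 2^{θ(f)} wt(f), C is the analogous sum over conservative flows, and θ(f) is the collision index. Assuming Talaska's theorem that every maximal minor of the boundary measurement matrix M equals the corresponding F_k(A∖V', V'∖A), it follows that F̃_k(a, b) = det(F̃₁(a_i, b_j))_{i,j=1}^k for all k and all tuples a, b. -/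

import Mathlib

open scoped Classical

/-- The number of inversions of a list with entries in a linear order. -/
def inversions {V : Type*} [LinearOrder V] (l : List V) : ℕ :=
  (Finset.univ.filter (fun p : Fin l.length × Fin l.length =>
    p.1 < p.2 ∧ l.get p.2 < l.get p.1)).card

/-- `sgn(a,b) = (−1)^{inv(a ⌢ (A∖a)) + inv(b ⌢ (A∖a))}`, where `a ⌢ (A∖a)` is the tuple
`a` followed by the remaining elements of `A` in increasing order, and similarly for `b`. -/
noncomputable def sgnAB {V R : Type*} [Fintype V] [LinearOrder V] [CommRing R]
    (A : Finset V) {k : ℕ} (a b : Fin k → V) : R :=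
  (-1) ^ (inversions (List.ofFn a ++ (A \ Finset.image a Finset.univ).sort (· ≤ ·)) +
          inversions (List.ofFn b ++ (A \ Finset.image a Finset.univ).sort (· ≤ ·)))

/-- `F̃_k(a,b)`: the signed flow generating function, equal to
`sgn(a,b) · F({a₁,…,a_k}, {b₁,…,b_k})` when the entries of `a` and of `b` are distinct,
and `0` otherwise.  Here `F A' B'` denotes the normalized weighted sum
`(1/C) Σ_{alternating flows f connecting A' to B'} 2^{θ(f)} wt(f)`. -/
noncomputable def Ftil {V R : Type*} [Fintype V] [LinearOrder V] [CommRing R]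
    (A : Finset V) (F : Finset V → Finset V → R) (k : ℕ) (a b : Fin k → V) : R :=
  if Function.Injective a ∧ Function.Injective b then
    sgnAB A a b * F (Finset.image a Finset.univ) (Finset.image b Finset.univ)
  else 0

open Equiv

lemma sign_eq_signAux' {n : ℕ} (σ : Equiv.Perm (Fin n)) : Perm.sign σ = Perm.signAux σ := by
  induction σ using Equiv.Perm.swap_induction_on
  case _ => simp [Perm.signAux_one]
  case _ f x y hxy ih => rw [Perm.sign_mul, Perm.signAux_mul, ih, Perm.sign_swap hxy,
      Perm.signAux_swap hxy]

lemma signAux_eq_pow' {n : ℕ} (σ : Equiv.Perm (Fin n)) :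
    Perm.signAux σ = (-1) ^ (Finset.univ.filter (fun p : Fin n × Fin n =>
      p.1 < p.2 ∧ σ p.2 < σ p.1)).card := by
  unfold Perm.signAux
  rw [Finset.prod_ite, Finset.prod_const, Finset.prod_const, one_pow, mul_one]
  congr 1
  apply Finset.card_nbij (fun x => (x.2, x.1))
  · intro x hx
    simp only [Finset.mem_coe, Finset.mem_filter, Perm.mem_finPairsLT] at hx ⊢
    refine ⟨Finset.mem_univ _, hx.1, ?_⟩
    rcases lt_or_eq_of_le hx.2 with h | h
    · exact h
    · exact absurd (σ.injective h) (ne_of_gt hx.1)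
  · intro x hx y hy h
    simp only [Prod.ext_iff] at h
    exact Sigma.ext h.2 (heq_of_eq h.1)
  · intro p hp
    simp only [Finset.coe_filter, Set.mem_setOf_eq, Finset.mem_univ, true_and] at hp
    exact ⟨⟨p.2, p.1⟩, by simp [Perm.mem_finPairsLT, hp.1, le_of_lt hp.2], rfl⟩

lemma sign_eq_inversions {V : Type*} [LinearOrder V] {n : ℕ} (σ : Equiv.Perm (Fin n))
    (l : List V) (hl : l.length = n)
    (h : ∀ p q : Fin n, σ p < σ q ↔
      l.get (Fin.cast hl.symm p) < l.get (Fin.cast hl.symm q)) :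
    Perm.sign σ = (-1) ^ inversions l := by
  subst hl
  rw [sign_eq_signAux', signAux_eq_pow']
  unfold inversions
  congr 1
  refine congrArg Finset.card (Finset.filter_congr ?_)
  intro p _
  have h1 := h p.2 p.1
  have e2 : Fin.cast rfl p.2 = p.2 := rfl
  have e1 : Fin.cast rfl p.1 = p.1 := rfl
  rw [e1, e2] at h1
  rw [h1]

lemma getElem_ofFn_append_left {α : Type*} {k : ℕ} (a : Fin k → α) (l : List α) (i : ℕ)
    (h : i < k) (hb : i < (List.ofFn a ++ l).length) :
    (List.ofFn a ++ l)[i] = a ⟨i, h⟩ := by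
  rw [List.getElem_append_left (by simpa using h), List.getElem_ofFn]

lemma getElem_ofFn_append_right {α : Type*} {k : ℕ} (a : Fin k → α) (l : List α) (i : ℕ)
    (h : k ≤ i) (hb : i < (List.ofFn a ++ l).length) :
    (List.ofFn a ++ l)[i] = l[i - k]'(by simp at hb; omega) := by
  rw [List.getElem_append_right (by simpa using h)]
  simp

/-- Key lemma: for injective tuples, `Ftil` is the minor of `M` on rows `a`, columns `b`. -/
lemma Ftil_eq_minor {V R : Type*} [Fintype V] [LinearOrder V] [CommRing R]
    (A : Finset V) (F : Finset V → Finset V → R)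
    {m : ℕ} (hA : A.card = m) (M : Matrix (Fin m) V R)
    (hcol : ∀ i j : Fin m, M j ((A.orderIsoOfFin hA i : V)) = if j = i then 1 else 0)
    (hminor : ∀ (V' : Finset V) (h : V'.card = m),
      Matrix.det (Matrix.of fun i j : Fin m => M i ((V'.orderIsoOfFin h j : V))) =
        F (A \ V') (V' \ A))
    (k : ℕ) (a b : Fin k → V) (ha : ∀ i, a i ∈ A) (hb : ∀ i, b i ∈ Aᶜ)
    (hai : Function.Injective a) (hbi : Function.Injective b) :
    Ftil A F k a b =
      Matrix.det (Matrix.of fun i j : Fin k =>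
        M ((A.orderIsoOfFin hA).symm ⟨a i, ha i⟩) (b j)) := by
  set ima := Finset.image a Finset.univ with hima
  set imb := Finset.image b Finset.univ with himb
  have hima_sub : ima ⊆ A := by
    intro x hx
    rw [hima, Finset.mem_image] at hx
    obtain ⟨i, _, rfl⟩ := hx
    exact ha i
  have himb_sub : imb ⊆ Aᶜ := by
    intro x hx
    rw [himb, Finset.mem_image] at hx
    obtain ⟨i, _, rfl⟩ := hx
    exact hb i
  have hima_card : ima.card = k := by
    rw [hima, Finset.card_image_of_injective _ hai, Finset.card_univ, Fintype.card_fin]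
  have himb_card : imb.card = k := by
    rw [himb, Finset.card_image_of_injective _ hbi, Finset.card_univ, Fintype.card_fin]
  have hk : k ≤ m := by
    rw [← hima_card, ← hA]; exact Finset.card_le_card hima_sub
  set n := m - k with hn
  have hm : k + n = m := by omega
  set Aa := A \ ima with hAa_def
  have hAa : Aa.card = n := by
    rw [hAa_def, Finset.card_sdiff_of_subset hima_sub, hA, hima_card]
  set c : Fin n → V := fun j => (Aa.orderEmbOfFin hAa j) with hc
  have hcA : ∀ j, c j ∈ Aa := fun j => Aa.orderEmbOfFin_mem hAa j
  have hcA' : ∀ j, c j ∈ A := fun j => (Finset.mem_sdiff.1 (hcA j)).1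
  have hcna : ∀ j, c j ∉ ima := fun j => (Finset.mem_sdiff.1 (hcA j)).2
  have hcinj : Function.Injective c := fun i j h => by
    exact (Aa.orderEmbOfFin hAa).injective (by exact h)
  set V' := Aa ∪ imb with hV'_def
  have hdisj : Disjoint Aa imb := by
    apply Finset.disjoint_left.2
    intro x hx hx'
    exact absurd (Finset.mem_sdiff.1 hx).1 (Finset.mem_compl.1 (himb_sub hx'))
  have hV' : V'.card = m := by
    rw [hV'_def, Finset.card_union_of_disjoint hdisj, hAa, himb_card]; omega
  have hAV' : A \ V' = ima := by
    ext x
    simp only [Finset.mem_sdiff, hV'_def, Finset.mem_union, hAa_def, not_or]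
    constructor
    · rintro ⟨hxA, h1, _⟩
      by_contra hx
      exact h1 ⟨hxA, hx⟩
    · intro hx
      refine ⟨hima_sub hx, fun h' => h'.2 hx,
        fun h' => (Finset.mem_compl.1 (himb_sub h')) (hima_sub hx)⟩
  have hV'A : V' \ A = imb := by
    ext x
    simp only [Finset.mem_sdiff, hV'_def, Finset.mem_union, hAa_def]
    constructor
    · rintro ⟨h1 | h1, hxA⟩
      · exact absurd h1.1 hxA
      · exact h1
    · intro hx
      exact ⟨Or.inr hx, Finset.mem_compl.1 (himb_sub hx)⟩
  -- indices
  set idxA : ∀ x, x ∈ A → Fin m := fun x hx => (A.orderIsoOfFin hA).symm ⟨x, hx⟩ with hidxA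
  have hidxA_apply : ∀ x (hx : x ∈ A), ((A.orderIsoOfFin hA (idxA x hx) : A) : V) = x := by
    intro x hx
    exact congrArg Subtype.val ((A.orderIsoOfFin hA).apply_symm_apply ⟨x, hx⟩)
  have hidxA_apply' : ∀ x (hx : x ∈ A), (A.orderEmbOfFin hA) (idxA x hx) = x :=
    hidxA_apply
  have hbV' : ∀ j, b j ∈ V' := fun j =>
    Finset.mem_union_right _ (by rw [himb]; exact Finset.mem_image_of_mem _ (Finset.mem_univ j))
  have hcV' : ∀ j, c j ∈ V' := fun j => Finset.mem_union_left _ (hcA j)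
  set idxV : ∀ x, x ∈ V' → Fin m := fun x hx => (V'.orderIsoOfFin hV').symm ⟨x, hx⟩ with hidxV
  have hidxV_apply : ∀ x (hx : x ∈ V'), ((V'.orderIsoOfFin hV' (idxV x hx) : V') : V) = x := by
    intro x hx
    exact congrArg Subtype.val ((V'.orderIsoOfFin hV').apply_symm_apply ⟨x, hx⟩)
  have hidxV_apply' : ∀ x (hx : x ∈ V'), (V'.orderEmbOfFin hV') (idxV x hx) = x :=
    hidxV_apply
  -- the row bijection
  set g : Fin k ⊕ Fin n → Fin m :=
    Sum.elim (fun i => idxA (a i) (ha i)) (fun j => idxA (c j) (hcA' j)) with hg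
  have hidxA_inj : ∀ x y hx hy, idxA x hx = idxA y hy → x = y := by
    intro x y hx hy h
    have := congrArg (A.orderEmbOfFin hA) h
    rwa [hidxA_apply', hidxA_apply'] at this
  have hgbij : Function.Bijective g := by
    rw [Fintype.bijective_iff_injective_and_card]
    constructor
    · rintro (i | i) (j | j) h <;> simp only [hg, Sum.elim_inl, Sum.elim_inr] at h
      · exact congrArg Sum.inl (hai (hidxA_inj _ _ _ _ h))
      · exact absurd (Finset.mem_image_of_mem a (Finset.mem_univ i))
          ((hidxA_inj _ _ _ _ h) ▸ hcna j)
      · exact absurd (Finset.mem_image_of_mem a (Finset.mem_univ j))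
          ((hidxA_inj _ _ _ _ h).symm ▸ hcna i)
      · exact congrArg Sum.inr (hcinj (hidxA_inj _ _ _ _ h))
    · simp [hm]
  set e : (Fin k ⊕ Fin n) ≃ Fin m := Equiv.ofBijective g hgbij with he
  -- the column bijection
  set g' : Fin k ⊕ Fin n → Fin m :=
    Sum.elim (fun j => idxV (b j) (hbV' j)) (fun j => idxV (c j) (hcV' j)) with hg'
  have hidxV_inj : ∀ x y hx hy, idxV x hx = idxV y hy → x = y := by
    intro x y hx hy h
    have := congrArg (V'.orderEmbOfFin hV') h
    rwa [hidxV_apply', hidxV_apply'] at this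
  have hbc : ∀ i j, b i ≠ c j := by
    intro i j h
    exact (Finset.mem_compl.1 (hb i)) (h ▸ hcA' j)
  have hg'bij : Function.Bijective g' := by
    rw [Fintype.bijective_iff_injective_and_card]
    constructor
    · rintro (i | i) (j | j) h <;> simp only [hg', Sum.elim_inl, Sum.elim_inr] at h
      · exact congrArg Sum.inl (hbi (hidxV_inj _ _ _ _ h))
      · exact absurd (hidxV_inj _ _ _ _ h) (hbc i j)
      · exact absurd (hidxV_inj _ _ _ _ h).symm (hbc j i)
      · exact congrArg Sum.inr (hcinj (hidxV_inj _ _ _ _ h))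
    · simp [hm]
  set f : (Fin k ⊕ Fin n) ≃ Fin m := Equiv.ofBijective g' hg'bij with hf
  -- the matrix N
  set N : Matrix (Fin m) (Fin m) R :=
    Matrix.of fun i j : Fin m => M i ((V'.orderIsoOfFin hV' j : V)) with hN_def
  have hNdet : N.det = F ima imb := by rw [hminor V' hV', hAV', hV'A]
  set D : Matrix (Fin k) (Fin k) R :=
    Matrix.of (fun i j : Fin k => M (idxA (a i) (ha i)) (b j)) with hD
  set C' : Matrix (Fin n) (Fin k) R :=
    Matrix.of (fun i j => M (idxA (c i) (hcA' i)) (b j)) with hC'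
  -- block structure
  have hblock : N.submatrix e f = Matrix.fromBlocks D 0 C' 1 := by
    ext i j
    rcases i with i | i <;> rcases j with j | j <;> rw [Matrix.submatrix_apply]
    · show M (e (Sum.inl i)) ((V'.orderIsoOfFin hV' (f (Sum.inl j)) : V)) = D i j
      have h1 : f (Sum.inl j) = idxV (b j) (hbV' j) := rfl
      rw [h1, hidxV_apply]
      rfl
    · show M (e (Sum.inl i)) ((V'.orderIsoOfFin hV' (f (Sum.inr j)) : V)) =
        (0 : Matrix (Fin k) (Fin n) R) i j
      have h1 : f (Sum.inr j) = idxV (c j) (hcV' j) := rfl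
      rw [h1, hidxV_apply]
      have h2 : c j = ((A.orderIsoOfFin hA (idxA (c j) (hcA' j)) : A) : V) :=
        (hidxA_apply _ _).symm
      rw [h2, hcol (idxA (c j) (hcA' j)) (e (Sum.inl i)), if_neg, Matrix.zero_apply]
      intro hEq
      have h3 : idxA (a i) (ha i) = idxA (c j) (hcA' j) := hEq
      exact (hcna j) ((hidxA_inj _ _ _ _ h3) ▸ Finset.mem_image_of_mem a (Finset.mem_univ i))
    · show M (e (Sum.inr i)) ((V'.orderIsoOfFin hV' (f (Sum.inl j)) : V)) = C' i j
      have h1 : f (Sum.inl j) = idxV (b j) (hbV' j) := rfl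
      rw [h1, hidxV_apply]
      rfl
    · show M (e (Sum.inr i)) ((V'.orderIsoOfFin hV' (f (Sum.inr j)) : V)) =
        (1 : Matrix (Fin n) (Fin n) R) i j
      have h1 : f (Sum.inr j) = idxV (c j) (hcV' j) := rfl
      rw [h1, hidxV_apply]
      have h2 : c j = ((A.orderIsoOfFin hA (idxA (c j) (hcA' j)) : A) : V) :=
        (hidxA_apply _ _).symm
      rw [h2, hcol (idxA (c j) (hcA' j)) (e (Sum.inr i))]
      by_cases hij : i = j
      · subst hij
        rw [if_pos (show e (Sum.inr i) = idxA (c i) (hcA' i) from rfl), Matrix.one_apply_eq]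
      · rw [if_neg, Matrix.one_apply_ne hij]
        intro hEq
        have h3 : idxA (c i) (hcA' i) = idxA (c j) (hcA' j) := hEq
        exact hij (hcinj (hidxA_inj _ _ _ _ h3))
  -- determinant of the submatrix
  set σ : Equiv.Perm (Fin k ⊕ Fin n) := f.trans e.symm with hσ
  have hsub2 : N.submatrix e f = (N.submatrix e e).submatrix id σ := by
    ext i j
    simp [hσ, Matrix.submatrix_apply]
  have hdet1 : (N.submatrix e f).det = (Perm.sign σ : R) * N.det := by
    rw [hsub2, Matrix.det_permute' σ (N.submatrix e e), Matrix.det_submatrix_equiv_self]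
  have hdetD : D.det = (Perm.sign σ : R) * F ima imb := by
    rw [← hNdet, ← hdet1, hblock, Matrix.det_fromBlocks_zero₁₂, Matrix.det_one, mul_one]
  -- sign computation
  set E : (Fin k ⊕ Fin n) ≃ Fin m := finSumFinEquiv.trans (finCongr hm) with hE
  set πe : Equiv.Perm (Fin m) := E.symm.trans e with hπe
  set πf : Equiv.Perm (Fin m) := E.symm.trans f with hπf
  have hστ : Perm.sign σ = Perm.sign πe * Perm.sign πf := by
    have h1 : ((E.symm.trans σ).trans E) = πf.trans πe.symm := by
      ext x
      simp [hσ, hπe, hπf, hE]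
    calc Perm.sign σ = Perm.sign ((E.symm.trans σ).trans E) :=
          (Equiv.Perm.sign_symm_trans_trans σ E).symm
      _ = Perm.sign (πf.trans πe.symm) := by rw [h1]
      _ = Perm.sign πe.symm * Perm.sign πf := Equiv.Perm.sign_trans _ _
      _ = Perm.sign πe * Perm.sign πf := by rw [Equiv.Perm.sign_symm]
  have hEval_l : ∀ i : Fin k, ((E (Sum.inl i) : Fin m) : ℕ) = (i : ℕ) := by
    intro i
    simp [hE, finSumFinEquiv_apply_left]
  have hEval_r : ∀ i : Fin n, ((E (Sum.inr i) : Fin m) : ℕ) = k + (i : ℕ) := by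
    intro i
    simp [hE, finSumFinEquiv_apply_right]
  have hla_len : (List.ofFn a ++ Aa.sort (· ≤ ·)).length = m := by
    simp [Finset.length_sort, hAa, hm]
  have hlb_len : (List.ofFn b ++ Aa.sort (· ≤ ·)).length = m := by
    simp [Finset.length_sort, hAa, hm]
  have hsort_get : ∀ (i : ℕ) (h : i < n) (h' : i < (Aa.sort (· ≤ ·)).length),
      (Aa.sort (· ≤ ·))[i] = c ⟨i, h⟩ := by
    intro i h h'
    rfl
  have hget_la : ∀ p : Fin m, (List.ofFn a ++ Aa.sort (· ≤ ·)).get (Fin.cast hla_len.symm p) =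
      (A.orderEmbOfFin hA) (πe p) := by
    intro p
    obtain ⟨s, rfl⟩ : ∃ s, p = E s := ⟨E.symm p, (E.apply_symm_apply p).symm⟩
    have hπ : πe (E s) = e s := by simp [hπe]
    rw [hπ, List.get_eq_getElem]
    simp only [Fin.coe_cast]
    rcases s with i | i
    · have he1 : e (Sum.inl i) = idxA (a i) (ha i) := rfl
      rw [he1, hidxA_apply']
      have hlt : ((E (Sum.inl i) : Fin m) : ℕ) < k := by rw [hEval_l]; exact i.isLt
      rw [getElem_ofFn_append_left a _ _ hlt]
      congr 1
    · have he1 : e (Sum.inr i) = idxA (c i) (hcA' i) := rfl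
      rw [he1, hidxA_apply']
      have hge : k ≤ ((E (Sum.inr i) : Fin m) : ℕ) := by rw [hEval_r]; omega
      rw [getElem_ofFn_append_right a _ _ hge, hsort_get _ (by rw [hEval_r]; omega)]
      congr 1
      apply Fin.ext
      show ((E (Sum.inr i) : Fin m) : ℕ) - k = (i : ℕ)
      rw [hEval_r]; omega
  have hget_lb : ∀ p : Fin m, (List.ofFn b ++ Aa.sort (· ≤ ·)).get (Fin.cast hlb_len.symm p) =
      (V'.orderEmbOfFin hV') (πf p) := by
    intro p
    obtain ⟨s, rfl⟩ : ∃ s, p = E s := ⟨E.symm p, (E.apply_symm_apply p).symm⟩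
    have hπ : πf (E s) = f s := by simp [hπf]
    rw [hπ, List.get_eq_getElem]
    simp only [Fin.coe_cast]
    rcases s with i | i
    · have he1 : f (Sum.inl i) = idxV (b i) (hbV' i) := rfl
      rw [he1, hidxV_apply']
      have hlt : ((E (Sum.inl i) : Fin m) : ℕ) < k := by rw [hEval_l]; exact i.isLt
      rw [getElem_ofFn_append_left b _ _ hlt]
      congr 1
    · have he1 : f (Sum.inr i) = idxV (c i) (hcV' i) := rfl
      rw [he1, hidxV_apply']
      have hge : k ≤ ((E (Sum.inr i) : Fin m) : ℕ) := by rw [hEval_r]; omega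
      rw [getElem_ofFn_append_right b _ _ hge, hsort_get _ (by rw [hEval_r]; omega)]
      congr 1
      apply Fin.ext
      show ((E (Sum.inr i) : Fin m) : ℕ) - k = (i : ℕ)
      rw [hEval_r]; omega
  have hsign_e : Perm.sign πe = (-1) ^ inversions (List.ofFn a ++ Aa.sort (· ≤ ·)) := by
    apply sign_eq_inversions πe _ hla_len
    intro p q
    rw [hget_la, hget_la]
    exact (OrderEmbedding.lt_iff_lt _).symm
  have hsign_f : Perm.sign πf = (-1) ^ inversions (List.ofFn b ++ Aa.sort (· ≤ ·)) := by
    apply sign_eq_inversions πf _ hlb_len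
    intro p q
    rw [hget_lb, hget_lb]
    exact (OrderEmbedding.lt_iff_lt _).symm
  have hsgn : ((Perm.sign σ : ℤˣ) : R) = sgnAB A a b := by
    rw [hστ, hsign_e, hsign_f, sgnAB]
    push_cast
    rw [← pow_add]
  -- conclude
  show Ftil A F k a b = D.det
  rw [Ftil, if_pos ⟨hai, hbi⟩, hdetD, hsgn]


/-- **The determinant relation for alternating flows.**  Let `G` be a planar circular
network with boundary vertices `V` (totally ordered clockwise), boundary sources `A` and
boundary sinks `B = Aᶜ`, and let `F A' B'` be the normalized generating function of
alternating flows connecting `A'` to `B'`.  Assume Talaska's theorem: there is a boundary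
measurement matrix `M` with rows indexed by `A` (via the order isomorphism with `Fin m`)
and columns by `V`, whose column at each source is the corresponding standard basis
vector, and whose maximal minor on each column set `V'` of size `m` (columns in increasing
order) equals `F (A ∖ V') (V' ∖ A)`.  Then `F̃_k(a, b) = det (F̃₁(a_i, b_j))` for all `k`
and all tuples `a ∈ A^k`, `b ∈ B^k`. -/
theorem flow_determinant {V R : Type*} [Fintype V] [LinearOrder V] [CommRing R]
    (A : Finset V) (F : Finset V → Finset V → R)
    {m : ℕ} (hA : A.card = m) (M : Matrix (Fin m) V R)
    (hcol : ∀ i j : Fin m, M j ((A.orderIsoOfFin hA i : V)) = if j = i then 1 else 0)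
    (hminor : ∀ (V' : Finset V) (h : V'.card = m),
      Matrix.det (Matrix.of fun i j : Fin m => M i ((V'.orderIsoOfFin h j : V))) =
        F (A \ V') (V' \ A))
    (k : ℕ) (a b : Fin k → V) (ha : ∀ i, a i ∈ A) (hb : ∀ i, b i ∈ Aᶜ) :
    Ftil A F k a b =
      Matrix.det (Matrix.of fun i j : Fin k => Ftil A F 1 ![a i] ![b j]) := by
  by_cases h : Function.Injective a ∧ Function.Injective b
  · obtain ⟨hai, hbi⟩ := h
    have h1 : ∀ (x y : V) (hx : x ∈ A) (hy : y ∈ Aᶜ),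
        Ftil A F 1 ![x] ![y] = M ((A.orderIsoOfFin hA).symm ⟨x, hx⟩) y := by
      intro x y hx hy
      have h2 := Ftil_eq_minor A F hA M hcol hminor 1 ![x] ![y]
        (fun i => by fin_cases i <;> exact hx) (fun i => by fin_cases i <;> exact hy)
        (Function.injective_of_subsingleton _) (Function.injective_of_subsingleton _)
      rw [h2, Matrix.det_fin_one]
      rfl
    rw [Ftil_eq_minor A F hA M hcol hminor k a b ha hb hai hbi]
    congr 1
    ext i j
    exact (h1 (a i) (b j) (ha i) (hb j)).symm
  · rw [Ftil, if_neg h]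
    rcases not_and_or.1 h with h' | h'
    · rw [Function.not_injective_iff] at h'
      obtain ⟨i, j, hEq, hne⟩ := h'
      symm
      apply Matrix.det_zero_of_row_eq hne
      funext t
      show Ftil A F 1 ![a i] ![b t] = Ftil A F 1 ![a j] ![b t]
      rw [hEq]
    · rw [Function.not_injective_iff] at h'
      obtain ⟨i, j, hEq, hne⟩ := h'
      symm
      apply Matrix.det_zero_of_column_eq hne
      intro t
      show Ftil A F 1 ![a t] ![b i] = Ftil A F 1 ![a t] ![b j]
      rw [hEq]
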